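/- Let y ∈ ℓ∞, m ∈ ℕ, let A be an operator in the convex hull of {σ_n : 1 ≤ n ≤ m}, and set s = (I−T)y. Then for all k ≥ 0 and r ≥ 1, max_{k < i ≤ k+r} (As)_i ≥ −2m‖y‖_{ℓ∞}/r. Consequently, for every k ≥ 0, sup_{i > k} (As)_i ≥ 0, i.e. limsup_{i→∞} (As)_i ≥ 0. -/

import Mathlib

open Filter BoundedContinuousFunction

noncomputable section

/-- `ℓ∞`: the space of bounded real sequences (indexed from `0`). -/
abbrev LInf : Type := BoundedContinuousFunction ℕ ℝ

/-- The translation (shift) operator `T(x₁,x₂,…) = (0,x₁,x₂,…)` (0-indexed). -/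
def shift (x : LInf) : LInf :=
  BoundedContinuousFunction.ofNormedAddCommGroup
    (fun n => if n = 0 then 0 else x (n - 1)) continuous_of_discreteTopology ‖x‖
    (by
      intro n
      rcases n with _ | n
      · simp [norm_nonneg x]
      · simpa using x.norm_coe_le_norm n)

/-- The dilation operator `σ_m`, repeating each entry `m` times
(0-indexed: `(σ_m x)ₙ = x_{⌊n/m⌋}`, i.e. `(σ_m x)ₙ = x_{⌈n/m⌉}` in 1-indexed notation). -/
def dil (m : ℕ) (x : LInf) : LInf :=
  x.compContinuous ⟨fun n => n / m, continuous_of_discreteTopology⟩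

/-- The dilation operator `σ_m` as a bounded linear operator on `ℓ∞`. -/
def dilOp (m : ℕ) : LInf →L[ℝ] LInf :=
  LinearMap.mkContinuous
    { toFun := dil m
      map_add' := fun x y => by ext n; simp [dil]
      map_smul' := fun c x => by ext n; simp [dil] }
    1
    (fun x => by
      rw [one_mul]
      exact x.norm_compContinuous_le _)

lemma shift_apply (x : LInf) (n : ℕ) : shift x n = if n = 0 then 0 else x (n-1) := rfl

lemma abs_shift_le (x : LInf) (n : ℕ) : |shift x n| ≤ ‖x‖ := by
  rw [shift_apply]
  split
  · simpa using norm_nonneg x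
  · simpa [Real.norm_eq_abs] using x.norm_coe_le_norm (n-1)

lemma abs_apply_le (x : LInf) (n : ℕ) : |x n| ≤ ‖x‖ := by
  simpa [Real.norm_eq_abs] using x.norm_coe_le_norm n

/-- Closed form for partial sums of `σ_n ((I - T) y)`. -/
lemma sum_range_dil (y : LInf) (n : ℕ) (hn : 1 ≤ n) (N : ℕ) :
    ∑ i ∈ Finset.range N, ((y - shift y) (i / n))
      = ((n : ℝ) - (N % n : ℕ)) * (shift y) (N / n) + ((N % n : ℕ) : ℝ) * y (N / n) := by
  induction N with
  | zero => simp [shift_apply, Nat.mod_self]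
  | succ N ih =>
    have hdm : n * (N / n) + N % n = N := Nat.div_add_mod N n
    have hlt : N % n < n := Nat.mod_lt _ hn
    have hN1 : N + 1 = n * (N / n) + (N % n + 1) := by omega
    rw [Finset.sum_range_succ, ih]
    by_cases hc : N % n + 1 = n
    · have hdiv : (N + 1) / n = N / n + 1 := by
        rw [hN1, hc, Nat.mul_add_div hn, Nat.div_self hn]
      have hmod : (N + 1) % n = 0 := by
        rw [hN1, hc, Nat.mul_add_mod, Nat.mod_self]
      have hsh : shift y (N / n + 1) = y (N / n) := by simp [shift_apply]
      rw [hdiv, hmod, hsh]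
      have hcast : ((N % n : ℕ) : ℝ) = (n : ℝ) - 1 := by
        have : N % n = n - 1 := by omega
        rw [this]
        push_cast [Nat.one_le_iff_ne_zero.mp hn, hn]
        ring
      rw [hcast]
      simp [BoundedContinuousFunction.sub_apply]
      ring
    · have hlt1 : N % n + 1 < n := by omega
      have hdiv : (N + 1) / n = N / n := by
        rw [hN1, Nat.mul_add_div hn, Nat.div_eq_of_lt hlt1, Nat.add_zero]
      have hmod : (N + 1) % n = N % n + 1 := by
        rw [hN1, Nat.mul_add_mod, Nat.mod_eq_of_lt hlt1]
      rw [hdiv, hmod]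
      push_cast
      simp [BoundedContinuousFunction.sub_apply]
      ring

lemma abs_sum_range_dil_le (y : LInf) (n : ℕ) (hn : 1 ≤ n) (N : ℕ) :
    |∑ i ∈ Finset.range N, ((y - shift y) (i / n))| ≤ (n : ℝ) * ‖y‖ := by
  rw [sum_range_dil y n hn N]
  have hlt : N % n < n := Nat.mod_lt _ hn
  have h1 : (0:ℝ) ≤ (n : ℝ) - (N % n : ℕ) := by
    have : ((N % n : ℕ) : ℝ) ≤ (n : ℝ) := by exact_mod_cast hlt.le
    linarith
  calc |((n : ℝ) - (N % n : ℕ)) * (shift y) (N / n) + ((N % n : ℕ) : ℝ) * y (N / n)|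
      ≤ |((n : ℝ) - (N % n : ℕ)) * (shift y) (N / n)| + |((N % n : ℕ) : ℝ) * y (N / n)| :=
        abs_add_le _ _
    _ ≤ ((n : ℝ) - (N % n : ℕ)) * ‖y‖ + ((N % n : ℕ) : ℝ) * ‖y‖ := by
        rw [abs_mul, abs_mul, abs_of_nonneg h1, abs_of_nonneg (by positivity : (0:ℝ) ≤ ((N % n : ℕ) : ℝ))]
        gcongr
        · exact abs_shift_le y _
        · exact abs_apply_le y _
    _ = (n : ℝ) * ‖y‖ := by ring

lemma block_sum_dil_ge (y : LInf) (n : ℕ) (hn : 1 ≤ n) (k r : ℕ) :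
    -(2 * (n : ℝ) * ‖y‖) ≤ ∑ i ∈ Finset.Ico k (k + r), ((dilOp n) (y - shift y)) i := by
  have heq : ∑ i ∈ Finset.Ico k (k + r), ((dilOp n) (y - shift y)) i
      = (∑ i ∈ Finset.range (k + r), ((y - shift y) (i / n)))
        - ∑ i ∈ Finset.range k, ((y - shift y) (i / n)) := by
    rw [eq_sub_iff_add_eq]
    have : ((dilOp n) (y - shift y) : ℕ → ℝ) = fun i => (y - shift y) (i / n) := rfl
    rw [this, Finset.sum_Ico_eq_sub _ (Nat.le_add_right k r)]
    ring
  rw [heq]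
  have h1 := abs_sum_range_dil_le y n hn (k + r)
  have h2 := abs_sum_range_dil_le y n hn k
  have h1' := abs_le.mp h1
  have h2' := abs_le.mp h2
  have := h1'.1
  have := h2'.2
  linarith

/-- For `s = (I - T)y` and `A` in the convex hull of `{σ_n : 1 ≤ n ≤ m}`:
the maximum of `As` over any `r` consecutive indices is at least `-2m‖y‖_∞ / r`;
consequently `sup_{i > k} (As)_i ≥ 0` for every `k`, i.e. `limsup_i (As)_i ≥ 0`. -/
theorem max_dilation_shift_difference_nonneg (y : LInf) (m : ℕ) (hm : 1 ≤ m)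
    (A : LInf →L[ℝ] LInf)
    (hA : A ∈ convexHull ℝ {S : LInf →L[ℝ] LInf | ∃ n : ℕ, 1 ≤ n ∧ n ≤ m ∧ S = dilOp n}) :
    (∀ k r : ℕ, (hr : 1 ≤ r) →
      -(2 * m * ‖y‖) / r ≤
        (Finset.Ico k (k + r)).sup'
          (Finset.nonempty_Ico.mpr (Nat.lt_add_of_pos_right hr))
          (fun i => (A (y - shift y)) i)) ∧
    (∀ k : ℕ, 0 ≤ ⨆ i ∈ Set.Ioi k, (A (y - shift y)) i) ∧
    0 ≤ Filter.limsup (fun i => (A (y - shift y)) i) Filter.atTop := by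
  set s : LInf := y - shift y with hs
  -- key block sum bound, proved via convexity
  have key : ∀ k r : ℕ, -(2 * (m : ℝ) * ‖y‖) ≤ ∑ i ∈ Finset.Ico k (k + r), (A s) i := by
    set P : Set (LInf →L[ℝ] LInf) :=
      {B | ∀ k r : ℕ, -(2 * (m : ℝ) * ‖y‖) ≤ ∑ i ∈ Finset.Ico k (k + r), (B s) i} with hP
    have hsub : {S : LInf →L[ℝ] LInf | ∃ n : ℕ, 1 ≤ n ∧ n ≤ m ∧ S = dilOp n} ⊆ P := by
      rintro S ⟨n, hn1, hnm, rfl⟩ k r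
      refine le_trans ?_ (block_sum_dil_ge y n hn1 k r)
      have hnm' : (n : ℝ) ≤ (m : ℝ) := by exact_mod_cast hnm
      nlinarith [norm_nonneg y]
    have hconv : Convex ℝ P := by
      intro B hB C hC a b ha hb hab
      intro k r
      have hpt : ∀ i : ℕ, ((a • B + b • C) s) i = a * (B s) i + b * (C s) i := by
        intro i
        simp [ContinuousLinearMap.add_apply, ContinuousLinearMap.smul_apply]
      simp_rw [hpt]
      rw [Finset.sum_add_distrib, ← Finset.mul_sum, ← Finset.mul_sum]
      have e1 := mul_le_mul_of_nonneg_left (hB k r) ha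
      have e2 := mul_le_mul_of_nonneg_left (hC k r) hb
      have e3 : a * (-(2 * (m : ℝ) * ‖y‖)) + b * (-(2 * (m : ℝ) * ‖y‖)) = -(2 * (m : ℝ) * ‖y‖) := by
        rw [← add_mul, hab, one_mul]
      linarith
    exact convexHull_min hsub hconv hA
  -- part 1
  have part1 : ∀ k r : ℕ, (hr : 1 ≤ r) →
      -(2 * m * ‖y‖) / r ≤
        (Finset.Ico k (k + r)).sup'
          (Finset.nonempty_Ico.mpr (Nat.lt_add_of_pos_right hr))
          (fun i => (A s) i) := by
    intro k r hr
    have hne : (Finset.Ico k (k + r)).Nonempty :=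
      Finset.nonempty_Ico.mpr (Nat.lt_add_of_pos_right hr)
    set M := (Finset.Ico k (k + r)).sup' hne (fun i => (A s) i) with hM
    have hsum : ∑ i ∈ Finset.Ico k (k + r), (A s) i ≤ (r : ℝ) * M := by
      calc ∑ i ∈ Finset.Ico k (k + r), (A s) i
          ≤ ∑ i ∈ Finset.Ico k (k + r), M :=
            Finset.sum_le_sum fun i hi => Finset.le_sup' _ hi
        _ = (r : ℝ) * M := by
            rw [Finset.sum_const, Nat.card_Ico]
            simp [nsmul_eq_mul]
    have hrpos : (0:ℝ) < r := by exact_mod_cast hr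
    rw [div_le_iff₀ hrpos]
    have := key k r
    linarith
  -- helper: in every block beyond k there is a large element
  have hfreq : ∀ (k : ℕ) (ε : ℝ), 0 < ε → ∃ i, k < i ∧ -ε ≤ (A s) i := by
    intro k ε hε
    obtain ⟨r', hr'⟩ := exists_nat_gt (2 * (m : ℝ) * ‖y‖ / ε)
    set r := r' + 1 with hrdef
    have hr1 : 1 ≤ r := Nat.le_add_left 1 r'
    have h1 := part1 (k + 1) r hr1
    obtain ⟨i, hi, hieq⟩ := Finset.exists_mem_eq_sup'
      (Finset.nonempty_Ico.mpr (Nat.lt_add_of_pos_right hr1)) (fun i => (A s) i)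
    rw [hieq] at h1
    refine ⟨i, ?_, ?_⟩
    · exact lt_of_lt_of_le (Nat.lt_succ_self k) (Finset.mem_Ico.mp hi).1
    · refine le_trans ?_ h1
      have hrpos : (0:ℝ) < r := by exact_mod_cast hr1
      rw [neg_div, neg_le_neg_iff, div_le_iff₀ hrpos]
      have hr'r : (r' : ℝ) ≤ (r : ℝ) := by exact_mod_cast Nat.le_succ r'
      have : 2 * (m : ℝ) * ‖y‖ / ε < (r : ℝ) := lt_of_lt_of_le hr' hr'r
      rw [div_lt_iff₀ hε] at this
      nlinarith
  refine ⟨part1, ?_, ?_⟩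
  · -- part 2
    intro k
    have hBdd : BddAbove (Set.range fun i : ℕ => ⨆ _ : i ∈ Set.Ioi k, (A s) i) := by
      refine ⟨‖A s‖, ?_⟩
      rintro _ ⟨i, rfl⟩
      exact Real.iSup_le (fun _ => le_trans (le_abs_self _) (abs_apply_le (A s) i)) (norm_nonneg _)
    by_contra hneg
    push_neg at hneg
    set S := ⨆ i ∈ Set.Ioi k, (A s) i with hS
    obtain ⟨i, hik, hi⟩ := hfreq k (-S/2) (by linarith)
    have hmem : i ∈ Set.Ioi k := Set.mem_Ioi.mpr hik
    have h1 : (A s) i ≤ ⨆ _ : i ∈ Set.Ioi k, (A s) i :=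
      le_ciSup (f := fun _ : i ∈ Set.Ioi k => (A s) i)
        ⟨(A s) i, by rintro _ ⟨_, rfl⟩; exact le_rfl⟩ hmem
    have hle : (A s) i ≤ S := le_trans h1 (le_ciSup hBdd i)
    linarith
  · -- part 3
    have hbdd : IsBoundedUnder (· ≤ ·) atTop (fun i => (A s) i) :=
      ⟨‖A s‖, eventually_map.mpr (Eventually.of_forall fun i =>
        le_trans (le_abs_self _) (abs_apply_le (A s) i))⟩
    by_contra hneg
    push_neg at hneg
    set L := Filter.limsup (fun i => (A s) i) Filter.atTop with hL
    have hfr : ∃ᶠ i in atTop, -(-L/2) ≤ (A s) i := by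
      rw [frequently_atTop]
      intro k
      obtain ⟨i, hik, hi⟩ := hfreq k (-L/2) (by linarith)
      exact ⟨i, hik.le, hi⟩
    have := le_limsup_of_frequently_le hfr hbdd
    rw [← hL] at this
    linarith

end
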